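/- Let ∅ = B_0 ⊊ ⋯ ⊊ B_k = V be the chain of locally-dense subgraphs of G. For every 0 ≤ i ≤ k and every real α with d(B_{i+1}, B_i) < α ≤ d(B_i, B_{i-1}) (interpreting the bounds as +∞ for i = 0 side and −∞ beyond k appropriately), the largest maximizer of W ↦ |E(W)| − α|W| over W ⊆ V is exactly B_i. -/

import Mathlib

open Finset

variable {V : Type*}

/-- Edges of `G` with both endpoints in `X`. -/
def innerEdges [Fintype V] [DecidableEq V] (G : SimpleGraph V) [DecidableRel G.Adj]
    (X : Finset V) : Finset (Sym2 V) :=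
  G.edgeFinset.filter (fun e => ∀ v ∈ e, v ∈ X)

/-- Marginal edges `Ẽ(X,Y) = E(X) ∪ E(X,Y)` (for disjoint `X`, `Y`):
edges with both endpoints in `X ∪ Y`, at least one in `X`. -/
def margEdges [Fintype V] [DecidableEq V] (G : SimpleGraph V) [DecidableRel G.Adj]
    (X Y : Finset V) : Finset (Sym2 V) :=
  G.edgeFinset.filter (fun e => (∀ v ∈ e, v ∈ X ∪ Y) ∧ ∃ v ∈ e, v ∈ X)

/-- Outer density `d(X,Y) = |Ẽ(X \ Y, Y)| / |X \ Y|`. -/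
def outDensity [Fintype V] [DecidableEq V] (G : SimpleGraph V) [DecidableRel G.Adj]
    (X Y : Finset V) : ℚ :=
  ((margEdges G (X \ Y) Y).card : ℚ) / ((X \ Y).card : ℚ)

/-- `W` is locally dense: there is no nonempty `X ⊆ W` and nonempty `Y` with `Y ∩ W = ∅`
such that `d(X, W \ X) ≤ d(Y, W)`. -/
def LocallyDense [Fintype V] [DecidableEq V] (G : SimpleGraph V) [DecidableRel G.Adj]
    (W : Finset V) : Prop :=
  ¬ ∃ X Y : Finset V, X.Nonempty ∧ Y.Nonempty ∧ X ⊆ W ∧ Y ∩ W = ∅ ∧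
      outDensity G X (W \ X) ≤ outDensity G Y W

/-- Number of neighbors of `x` in `U`. -/
def degIn [DecidableEq V] (G : SimpleGraph V) [DecidableRel G.Adj] (x : V) (U : Finset V) : ℕ :=
  (U.filter (G.Adj x)).card

section Aux
variable [Fintype V] [DecidableEq V] (G : SimpleGraph V) [DecidableRel G.Adj]

lemma margEdges_mono (X : Finset V) {C C' : Finset V} (h : C ⊆ C') :
    margEdges G X C ⊆ margEdges G X C' := by
  intro e he
  simp only [margEdges, Finset.mem_filter, Finset.mem_union] at he ⊢
  obtain ⟨hG, h1, h2⟩ := he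
  refine ⟨hG, fun v hv => ?_, h2⟩
  rcases h1 v hv with h' | h'
  · exact Or.inl h'
  · exact Or.inr (h h')

lemma margEdges_empty_left (Y : Finset V) : margEdges G ∅ Y = ∅ := by
  apply Finset.filter_false_of_mem
  rintro e _ ⟨h1, v, hv, hvA⟩
  simp at hvA

lemma margEdges_split {A B C : Finset V} (h : Disjoint A (B ∪ C)) :
    (margEdges G (A ∪ B) C).card
      = (margEdges G A (B ∪ C)).card + (margEdges G B C).card := by
  classical
  have hdisj : Disjoint (margEdges G A (B ∪ C)) (margEdges G B C) := by
    rw [Finset.disjoint_left]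
    intro e he1 he2
    simp only [margEdges, Finset.mem_filter] at he1 he2
    obtain ⟨-, -, v, hv, hvA⟩ := he1
    exact (Finset.disjoint_left.1 h) hvA (he2.2.1 v hv)
  have hunion : margEdges G (A ∪ B) C = margEdges G A (B ∪ C) ∪ margEdges G B C := by
    ext e
    simp only [margEdges, Finset.mem_filter, Finset.mem_union]
    constructor
    · rintro ⟨hG, hall, v, hv, hvAB⟩
      by_cases hA : ∃ v ∈ e, v ∈ A
      · refine Or.inl ⟨hG, fun w hw => ?_, hA⟩
        rcases hall w hw with (h' | h') | h'
        · exact Or.inl h'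
        · exact Or.inr (Or.inl h')
        · exact Or.inr (Or.inr h')
      · push_neg at hA
        refine Or.inr ⟨hG, fun w hw => ?_, v, hv, ?_⟩
        · rcases hall w hw with (h' | h') | h'
          · exact absurd h' (hA w hw)
          · exact Or.inl h'
          · exact Or.inr h'
        · rcases hvAB with h' | h'
          · exact absurd h' (hA v hv)
          · exact h'
    · rintro (⟨hG, h1, v, hv, hvA⟩ | ⟨hG, h1, v, hv, hvB⟩)
      · refine ⟨hG, fun w hw => ?_, v, hv, Or.inl hvA⟩
        rcases h1 w hw with h' | h' | h'
        · exact Or.inl (Or.inl h')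
        · exact Or.inl (Or.inr h')
        · exact Or.inr h'
      · refine ⟨hG, fun w hw => ?_, v, hv, Or.inr hvB⟩
        rcases h1 w hw with h' | h'
        · exact Or.inl (Or.inr h')
        · exact Or.inr h'
  rw [hunion, Finset.card_union_of_disjoint hdisj]

lemma innerEdges_eq_marg (Z : Finset V) : innerEdges G Z = margEdges G Z ∅ := by
  ext e
  induction e using Sym2.inductionOn with
  | hf x y =>
    simp only [innerEdges, margEdges, Finset.mem_filter, Finset.union_empty]
    constructor
    · rintro ⟨hG, h1⟩
      exact ⟨hG, h1, x, by simp, h1 x (by simp)⟩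
    · rintro ⟨hG, h1, -⟩
      exact ⟨hG, h1⟩

lemma innerEdges_split {X Y : Finset V} (h : Disjoint X Y) :
    (innerEdges G (X ∪ Y)).card = (margEdges G X Y).card + (innerEdges G Y).card := by
  rw [innerEdges_eq_marg, innerEdges_eq_marg]
  have := margEdges_split G (A := X) (B := Y) (C := ∅) (by simpa using h)
  simpa using this

lemma outDensity_of_disjoint {X Y : Finset V} (h : Disjoint X Y) :
    outDensity G X Y = ((margEdges G X Y).card : ℚ) / (X.card : ℚ) := by
  rw [outDensity, Finset.sdiff_eq_self_of_disjoint h]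

end Aux

section Aux2
variable [Fintype V] [DecidableEq V] (G : SimpleGraph V) [DecidableRel G.Adj]

lemma card_pos_rat {X : Finset V} (h : X.Nonempty) : (0:ℚ) < (X.card : ℚ) := by
  exact_mod_cast Finset.card_pos.2 h

lemma ld_mul {W X Y : Finset V} (hW : LocallyDense G W) (hXW : X ⊆ W) (hXne : X.Nonempty)
    (hYW : Disjoint Y W) (hYne : Y.Nonempty) :
    ((margEdges G Y W).card : ℚ) * X.card < ((margEdges G X (W \ X)).card : ℚ) * Y.card := by
  by_contra hcon
  push_neg at hcon
  apply hW
  refine ⟨X, Y, hXne, hYne, hXW, Finset.disjoint_iff_inter_eq_empty.1 hYW, ?_⟩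
  rw [outDensity_of_disjoint G disjoint_sdiff_self_right, outDensity_of_disjoint G hYW,
    div_le_div_iff₀ (card_pos_rat hXne) (card_pos_rat hYne)]
  exact hcon

end Aux2

section Chain
variable [Fintype V] [DecidableEq V] (G : SimpleGraph V) [DecidableRel G.Adj]

lemma ext_density_le {k : ℕ} {B : ℕ → Finset V}
    (hchain : ∀ i j, i < j → j ≤ k → B i ⊂ B j)
    (hall : ∀ W : Finset V, LocallyDense G W ↔ ∃ i ≤ k, W = B i)
    (hBk : B k = Finset.univ)
    {j : ℕ} (hjk : j < k) {Y : Finset V} (hY : Disjoint Y (B j)) :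
    ((margEdges G Y (B j)).card : ℚ)
      ≤ outDensity G (B (j+1)) (B j) * Y.card := by
  classical
  set c : ℚ := outDensity G (B (j+1)) (B j) with hc
  -- the candidate family
  set S : Finset (Finset V) :=
    (Finset.univ : Finset (Finset V)).filter (fun Z => Z.Nonempty ∧ Disjoint Z (B j)) with hSdef
  have hmemS : ∀ Z : Finset V, Z ∈ S ↔ Z.Nonempty ∧ Disjoint Z (B j) := by
    intro Z; simp [hSdef]
  set d : Finset V → ℚ := fun Z => ((margEdges G Z (B j)).card : ℚ) / Z.card with hd
  have hSne : S.Nonempty := by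
    have hss : B j ⊂ Finset.univ := by
      have := hchain j k hjk le_rfl; rwa [hBk] at this
    obtain ⟨v, -, hv⟩ := Finset.exists_of_ssubset hss
    exact ⟨{v}, (hmemS _).2 ⟨Finset.singleton_nonempty v, by simp [Finset.disjoint_left, hv]⟩⟩
  obtain ⟨Z₀, hZ₀S, hZ₀max⟩ := Finset.exists_max_image S d hSne
  set μ : ℚ := d Z₀ with hμ
  obtain ⟨Ys, hYsS', hYsmax⟩ := Finset.exists_max_image (S.filter (fun Z => μ ≤ d Z))
    (fun Z => Z.card) ⟨Z₀, Finset.mem_filter.2 ⟨hZ₀S, le_refl _⟩⟩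
  have hYsS : Ys ∈ S := (Finset.mem_filter.1 hYsS').1
  have hYsne : Ys.Nonempty := ((hmemS _).1 hYsS).1
  have hYsdj : Disjoint Ys (B j) := ((hmemS _).1 hYsS).2
  have hYscard : (0:ℚ) < (Ys.card : ℚ) := card_pos_rat hYsne
  have hdYs : d Ys = μ :=
    le_antisymm (hZ₀max _ hYsS) (Finset.mem_filter.1 hYsS').2
  have hmYs : ((margEdges G Ys (B j)).card : ℚ) = μ * Ys.card := by
    have := hdYs
    rw [hd] at this
    field_simp at this
    linarith [this]
  have hle_gen : ∀ Z : Finset V, Disjoint Z (B j) →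
      ((margEdges G Z (B j)).card : ℚ) ≤ μ * Z.card := by
    intro Z hZdj
    rcases Z.eq_empty_or_nonempty with rfl | hZne
    · simp [margEdges_empty_left]
    · have hZS : Z ∈ S := (hmemS _).2 ⟨hZne, hZdj⟩
      have := hZ₀max _ hZS
      rw [hd] at this
      rw [div_le_iff₀ (card_pos_rat hZne)] at this
      exact this
  have hsize : ∀ Z ∈ S, d Z = μ → Z.card ≤ Ys.card := by
    intro Z hZS hdZ
    exact hYsmax Z (Finset.mem_filter.2 ⟨hZS, le_of_eq hdZ.symm⟩)
  set W : Finset V := B j ∪ Ys with hW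
  have hBjW : B j ⊆ W := Finset.subset_union_left
  have hYsW : Ys ⊆ W := Finset.subset_union_right
  -- external strict bound for W
  have hext : ∀ Z : Finset V, Z.Nonempty → Disjoint Z W →
      ((margEdges G Z W).card : ℚ) < μ * Z.card := by
    intro Z hZne hZW
    have hZBj : Disjoint Z (B j) := hZW.mono_right hBjW
    have hZYs : Disjoint Z Ys := hZW.mono_right hYsW
    have hsplit : (margEdges G (Z ∪ Ys) (B j)).card
        = (margEdges G Z (Ys ∪ B j)).card + (margEdges G Ys (B j)).card :=
      margEdges_split G (by rw [Finset.disjoint_union_right]; exact ⟨hZYs, hZBj⟩)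
    have hU : Ys ∪ B j = W := Finset.union_comm _ _
    have hZUS : Z ∪ Ys ∈ S := (hmemS _).2 ⟨hZne.mono Finset.subset_union_left,
      Finset.disjoint_union_left.2 ⟨hZBj, hYsdj⟩⟩
    have hcard : ((Z ∪ Ys).card : ℚ) = Z.card + Ys.card := by
      rw [Finset.card_union_of_disjoint hZYs]; push_cast; ring
    have hgt : ((Z ∪ Ys).card : ℚ) > Ys.card := by
      have : (0:ℚ) < Z.card := card_pos_rat hZne
      rw [hcard]; linarith
    have hdlt : d (Z ∪ Ys) < μ := by
      rcases lt_or_eq_of_le (hZ₀max _ hZUS) with h | h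
      · exact h
      · exfalso
        have := hsize _ hZUS h
        have : ((Z ∪ Ys).card : ℚ) ≤ Ys.card := by exact_mod_cast this
        linarith
    have hZUcardpos : (0:ℚ) < ((Z ∪ Ys).card : ℚ) := by
      have : (0:ℚ) < Z.card := card_pos_rat hZne
      rw [hcard]; linarith
    have hmlt : ((margEdges G (Z ∪ Ys) (B j)).card : ℚ) < μ * (Z.card + Ys.card) := by
      have := hdlt
      rw [hd, div_lt_iff₀ hZUcardpos] at this
      rw [← hcard]; exact this
    have : ((margEdges G Z (Ys ∪ B j)).card : ℚ)
        = ((margEdges G (Z ∪ Ys) (B j)).card : ℚ) - ((margEdges G Ys (B j)).card : ℚ) := by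
      rw [hsplit]; push_cast; ring
    rw [hU] at this
    rw [this, hmYs]
    linarith
  -- internal bound for W
  have hint : ∀ X : Finset V, X ⊆ W →
      μ * X.card ≤ ((margEdges G X (W \ X)).card : ℚ) := by
    intro X hXW
    set X₁ : Finset V := X ∩ B j with hX₁def
    set X₂ : Finset V := X \ B j with hX₂def
    have hX2Ys : X₂ ⊆ Ys := by
      intro a ha
      rw [hX₂def, Finset.mem_sdiff] at ha
      rcases Finset.mem_union.1 (hXW ha.1) with h' | h'
      · exact absurd h' ha.2
      · exact h'
    have hXsplit : X₂ ∪ X₁ = X := by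
      rw [hX₂def, hX₁def]
      ext a; simp only [Finset.mem_union, Finset.mem_sdiff, Finset.mem_inter]
      tauto
    have hd12 : Disjoint X₂ (X₁ ∪ (W \ X)) := by
      rw [Finset.disjoint_union_right]
      constructor
      · rw [hX₂def, hX₁def, Finset.disjoint_left]
        intro a ha ha'
        exact (Finset.mem_sdiff.1 ha).2 (Finset.mem_inter.1 ha').2
      · exact Finset.disjoint_left.2 fun a ha ha' =>
          (Finset.mem_sdiff.1 ha').2 (Finset.mem_sdiff.1 ha).1
    have hsplit1 : (margEdges G X (W \ X)).card
        = (margEdges G X₂ (X₁ ∪ (W \ X))).card + (margEdges G X₁ (W \ X)).card := by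
      rw [← hXsplit]
      exact margEdges_split G (by rw [hXsplit]; exact hd12)
    have hWX2 : X₁ ∪ (W \ X) = W \ X₂ := by
      rw [hX₁def, hX₂def]
      ext a
      simp only [Finset.mem_union, Finset.mem_sdiff, Finset.mem_inter]
      have haW : a ∈ X → a ∈ W := fun h => hXW h
      tauto
    -- bound for X₂
    have hsplit2 : (margEdges G Ys (B j)).card
        = (margEdges G X₂ ((Ys \ X₂) ∪ B j)).card + (margEdges G (Ys \ X₂) (B j)).card := by
      have hdj2 : Disjoint X₂ ((Ys \ X₂) ∪ B j) := by
        rw [Finset.disjoint_union_right]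
        exact ⟨Finset.disjoint_sdiff, Finset.disjoint_left.2 fun a ha ha' =>
          (Finset.mem_sdiff.1 ha).2 ha'⟩
      have h := margEdges_split G hdj2
      rwa [Finset.union_sdiff_of_subset hX2Ys] at h
    have hWX2' : (Ys \ X₂) ∪ B j = W \ X₂ := by
      rw [hX₂def]
      ext a
      simp only [Finset.mem_union, Finset.mem_sdiff, hW]
      tauto
    have hle2 : ((margEdges G (Ys \ X₂) (B j)).card : ℚ) ≤ μ * ((Ys \ X₂).card) :=
      hle_gen _ (hYsdj.mono_left Finset.sdiff_subset)
    have hcard2 : ((Ys \ X₂).card : ℚ) = (Ys.card : ℚ) - X₂.card := by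
      rw [Finset.card_sdiff_of_subset hX2Ys]
      have := Finset.card_le_card hX2Ys
      push_cast [Nat.cast_sub this]
      ring
    have hbound2 : μ * X₂.card ≤ ((margEdges G X₂ (W \ X₂)).card : ℚ) := by
      have h1 : ((margEdges G X₂ (W \ X₂)).card : ℚ)
          = ((margEdges G Ys (B j)).card : ℚ) - ((margEdges G (Ys \ X₂) (B j)).card : ℚ) := by
        rw [← hWX2', hsplit2]; push_cast; ring
      rw [h1, hmYs]
      rw [hcard2] at hle2
      linarith
    -- bound for X₁
    have hbound1 : μ * X₁.card ≤ ((margEdges G X₁ (W \ X)).card : ℚ) := by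
      rcases X₁.eq_empty_or_nonempty with h | hX₁ne
      · rw [h]; simp
      · have hmono : margEdges G X₁ (B j \ X₁) ⊆ margEdges G X₁ (W \ X) := by
          apply margEdges_mono
          intro a ha
          rw [Finset.mem_sdiff] at ha ⊢
          refine ⟨hBjW ha.1, fun haX => ha.2 ?_⟩
          rw [hX₁def]; exact Finset.mem_inter.2 ⟨haX, ha.1⟩
        have hldBj : LocallyDense G (B j) := (hall _).2 ⟨j, le_of_lt hjk, rfl⟩
        have key := ld_mul G hldBj (Finset.inter_subset_right) hX₁ne hYsdj hYsne
        rw [← hX₁def] at key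
        rw [hmYs] at key
        have h2 : μ * (Ys.card : ℚ) * X₁.card = μ * X₁.card * Ys.card := by ring
        rw [h2] at key
        have h3 := (mul_lt_mul_iff_left₀ hYscard).1 key
        calc μ * X₁.card ≤ ((margEdges G X₁ (B j \ X₁)).card : ℚ) := le_of_lt h3
          _ ≤ _ := by exact_mod_cast Finset.card_le_card hmono
    have hcardX : (X.card : ℚ) = (X₂.card : ℚ) + X₁.card := by
      rw [← hXsplit, Finset.card_union_of_disjoint (hd12.mono_right Finset.subset_union_left)]
      push_cast; ring
    rw [hcardX]
    calc μ * ((X₂.card : ℚ) + X₁.card) = μ * X₂.card + μ * X₁.card := by ring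
      _ ≤ ((margEdges G X₂ (W \ X₂)).card : ℚ) + ((margEdges G X₁ (W \ X)).card : ℚ) := by
          exact add_le_add hbound2 hbound1
      _ = _ := by rw [hsplit1, ← hWX2]; push_cast; ring
  -- W is locally dense
  have hld : LocallyDense G W := by
    rintro ⟨X, Z, hXne, hZne, hXW, hZWe, hcontra⟩
    have hZW : Disjoint Z W := Finset.disjoint_iff_inter_eq_empty.2 hZWe
    have h1 := hint X hXW
    have h2 := hext Z hZne hZW
    rw [outDensity_of_disjoint G disjoint_sdiff_self_right, outDensity_of_disjoint G hZW,
      div_le_div_iff₀ (card_pos_rat hXne) (card_pos_rat hZne)] at hcontra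
    have hXpos := card_pos_rat hXne
    have hZpos := card_pos_rat hZne
    nlinarith [h1, h2, hcontra, hXpos, hZpos]
  obtain ⟨l, hlk, hWl⟩ := (hall W).1 hld
  have hjl : j < l := by
    by_contra h
    push_neg at h
    have hBlBj : B l ⊆ B j := by
      rcases lt_or_eq_of_le h with h' | h'
      · exact (hchain l j h' (le_of_lt hjk)).subset
      · rw [h']
    obtain ⟨y, hy⟩ := hYsne
    exact (Finset.disjoint_left.1 hYsdj) hy (hBlBj (hWl ▸ hYsW hy))
  have hj1l : j + 1 ≤ l := hjl
  have hj1k : j + 1 ≤ k := hjk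
  set Y₀ : Finset V := B (j+1) \ B j with hY₀def
  have hssj1 : B j ⊂ B (j+1) := hchain j (j+1) (Nat.lt_succ_self j) hj1k
  have hY₀ne : Y₀.Nonempty := by
    rw [hY₀def, Finset.sdiff_nonempty]
    exact (Finset.ssubset_def.mp hssj1).2
  have hY₀S : Y₀ ∈ S := (hmemS _).2 ⟨hY₀ne, Finset.sdiff_disjoint⟩
  have hdY₀ : d Y₀ = c := by
    simp only [hd, hc, outDensity, hY₀def]
  have hcμ : c ≤ μ := hdY₀ ▸ hZ₀max _ hY₀S
  have hY₀pos : (0:ℚ) < (Y₀.card : ℚ) := card_pos_rat hY₀ne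
  have hbc : ((margEdges G Y₀ (B j)).card : ℚ) = c * Y₀.card := by
    have := hdY₀
    rw [hd, div_eq_iff (ne_of_gt hY₀pos)] at this
    exact this
  have hμc : μ ≤ c := by
    rcases lt_or_eq_of_le hj1l with hlt | heq
    · exfalso
      have hssW : B (j+1) ⊂ W := by
        rw [hWl]; exact hchain (j+1) l hlt hlk
      have hBj1W : B (j+1) ⊆ W := hssW.subset
      set Z' : Finset V := W \ B (j+1) with hZ'def
      have hZ'ne : Z'.Nonempty := by
        rw [hZ'def, Finset.sdiff_nonempty]
        exact (Finset.ssubset_def.mp hssW).2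
      have hZ'dj : Disjoint Z' (B (j+1)) := Finset.sdiff_disjoint
      have hUB : Y₀ ∪ B j = B (j+1) := by
        rw [hY₀def]; exact Finset.sdiff_union_of_subset hssj1.subset
      have hZY : Z' ∪ Y₀ = Ys := by
        have hYsW' : W \ B j = Ys := by
          rw [hW]; exact Finset.union_sdiff_cancel_left hYsdj.symm
        rw [← hYsW', hZ'def, hY₀def]
        ext a
        simp only [Finset.mem_union, Finset.mem_sdiff]
        have h1 : a ∈ B j → a ∈ B (j+1) := fun h => hssj1.subset h
        have h2 : a ∈ B (j+1) → a ∈ W := fun h => hBj1W h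
        tauto
      have hsplitY := margEdges_split G (A := Z') (B := Y₀) (C := B j)
        (by rw [hUB]; exact hZ'dj)
      rw [hZY, hUB] at hsplitY
      have hld1 : LocallyDense G (B (j+1)) := (hall _).2 ⟨j+1, hj1k, rfl⟩
      have key := ld_mul G hld1 (X := Y₀) (Y := Z')
        (by rw [hY₀def]; exact Finset.sdiff_subset) hY₀ne hZ'dj hZ'ne
      have hBY : B (j+1) \ Y₀ = B j := by
        rw [hY₀def]
        exact Finset.sdiff_sdiff_eq_self hssj1.subset
      rw [hBY, hbc] at key
      have hZ'pos : (0:ℚ) < (Z'.card : ℚ) := card_pos_rat hZ'ne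
      have hkey2 : ((margEdges G Z' (B (j+1))).card : ℚ) < c * Z'.card := by
        have h2 : c * (Y₀.card:ℚ) * Z'.card = c * Z'.card * Y₀.card := by ring
        rw [h2] at key
        exact (mul_lt_mul_iff_left₀ hY₀pos).1 key
      have hcardYs : (Ys.card : ℚ) = (Z'.card : ℚ) + Y₀.card := by
        rw [← hZY, Finset.card_union_of_disjoint
          (hZ'dj.mono_right (by rw [hY₀def]; exact Finset.sdiff_subset))]
        push_cast; ring
      have hmYs2 : μ * (Ys.card : ℚ)
          = ((margEdges G Z' (B (j+1))).card : ℚ) + c * Y₀.card := by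
        rw [← hmYs, ← hbc, hsplitY]; push_cast; ring
      have hmul : c * (Ys.card:ℚ) ≤ μ * Ys.card :=
        mul_le_mul_of_nonneg_right hcμ (le_of_lt hYscard)
      have hdist : c * (Ys.card:ℚ) = c * Z'.card + c * Y₀.card := by
        rw [hcardYs]; ring
      linarith
    · have hWj1 : W = B (j+1) := by rw [hWl, heq]
      have hYsY₀ : Ys = Y₀ := by
        rw [hY₀def, ← hWj1, hW, Finset.union_sdiff_cancel_left hYsdj.symm]
      rw [← hdYs, hYsY₀, hdY₀]
  rcases Y.eq_empty_or_nonempty with rfl | hYne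
  · simp [margEdges_empty_left]
  · calc ((margEdges G Y (B j)).card : ℚ) ≤ μ * Y.card := hle_gen Y hY
      _ ≤ c * Y.card := by
          apply mul_le_mul_of_nonneg_right hμc
          positivity


lemma int_density_ge {k : ℕ} {B : ℕ → Finset V}
    (hchain : ∀ i j, i < j → j ≤ k → B i ⊂ B j)
    (hall : ∀ W : Finset V, LocallyDense G W ↔ ∃ i ≤ k, W = B i)
    (hBk : B k = Finset.univ)
    {j : ℕ} (hjk : j < k) {X : Finset V} (hX : X ⊆ B (j+1)) :
    outDensity G (B (j+1)) (B j) * X.card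
      ≤ ((margEdges G X (B (j+1) \ X)).card : ℚ) := by
  classical
  set c : ℚ := outDensity G (B (j+1)) (B j) with hc
  have hj1k : j + 1 ≤ k := hjk
  set Bi : Finset V := B (j+1) with hBidef
  have hssj1 : B j ⊂ Bi := hchain j (j+1) (Nat.lt_succ_self j) hj1k
  set Y₀ : Finset V := Bi \ B j with hY₀def
  have hY₀ne : Y₀.Nonempty := by
    rw [hY₀def, Finset.sdiff_nonempty]
    exact (Finset.ssubset_def.mp hssj1).2
  have hY₀pos : (0:ℚ) < (Y₀.card : ℚ) := card_pos_rat hY₀ne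
  have hbc : ((margEdges G Y₀ (B j)).card : ℚ) = c * Y₀.card := by
    rw [hc, outDensity, ← hY₀def]
    exact (div_mul_cancel₀ _ (ne_of_gt hY₀pos)).symm
  set X₁ : Finset V := X ∩ B j with hX₁def
  set X₂ : Finset V := X \ B j with hX₂def
  have hX2Y₀ : X₂ ⊆ Y₀ := by
    intro a ha
    rw [hX₂def, Finset.mem_sdiff] at ha
    rw [hY₀def, Finset.mem_sdiff]
    exact ⟨hX ha.1, ha.2⟩
  have hXsplit : X₂ ∪ X₁ = X := by
    rw [hX₂def, hX₁def]
    ext a; simp only [Finset.mem_union, Finset.mem_sdiff, Finset.mem_inter]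
    tauto
  have hd12 : Disjoint X₂ (X₁ ∪ (Bi \ X)) := by
    rw [Finset.disjoint_union_right]
    constructor
    · rw [hX₂def, hX₁def, Finset.disjoint_left]
      intro a ha ha'
      exact (Finset.mem_sdiff.1 ha).2 (Finset.mem_inter.1 ha').2
    · exact Finset.disjoint_left.2 fun a ha ha' =>
        (Finset.mem_sdiff.1 ha').2 (Finset.mem_sdiff.1 ha).1
  have hsplit1 : (margEdges G X (Bi \ X)).card
      = (margEdges G X₂ (X₁ ∪ (Bi \ X))).card + (margEdges G X₁ (Bi \ X)).card := by
    rw [← hXsplit]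
    exact margEdges_split G (by rw [hXsplit]; exact hd12)
  have hWX2 : X₁ ∪ (Bi \ X) = Bi \ X₂ := by
    rw [hX₁def, hX₂def]
    ext a
    simp only [Finset.mem_union, Finset.mem_sdiff, Finset.mem_inter]
    have haW : a ∈ X → a ∈ Bi := fun h => hX h
    tauto
  have hsplit2 : (margEdges G Y₀ (B j)).card
      = (margEdges G X₂ ((Y₀ \ X₂) ∪ B j)).card + (margEdges G (Y₀ \ X₂) (B j)).card := by
    have hdj2 : Disjoint X₂ ((Y₀ \ X₂) ∪ B j) := by
      rw [Finset.disjoint_union_right]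
      exact ⟨Finset.disjoint_sdiff, Finset.disjoint_left.2 fun a ha ha' =>
        (Finset.mem_sdiff.1 ha).2 ha'⟩
    have h := margEdges_split G hdj2
    rwa [Finset.union_sdiff_of_subset hX2Y₀] at h
  have hWX2' : (Y₀ \ X₂) ∪ B j = Bi \ X₂ := by
    rw [hX₂def, hY₀def]
    ext a
    simp only [Finset.mem_union, Finset.mem_sdiff]
    have h1 : a ∈ B j → a ∈ Bi := fun h => hssj1.subset h
    tauto
  have hle2 : ((margEdges G (Y₀ \ X₂) (B j)).card : ℚ) ≤ c * ((Y₀ \ X₂).card) := by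
    exact ext_density_le G hchain hall hBk hjk
      (Y := Y₀ \ X₂) (Finset.sdiff_disjoint.mono_left Finset.sdiff_subset)
  have hcard2 : ((Y₀ \ X₂).card : ℚ) = (Y₀.card : ℚ) - X₂.card := by
    rw [Finset.card_sdiff_of_subset hX2Y₀]
    have := Finset.card_le_card hX2Y₀
    push_cast [Nat.cast_sub this]
    ring
  have hbound2 : c * X₂.card ≤ ((margEdges G X₂ (Bi \ X₂)).card : ℚ) := by
    have h1 : ((margEdges G X₂ (Bi \ X₂)).card : ℚ)
        = ((margEdges G Y₀ (B j)).card : ℚ) - ((margEdges G (Y₀ \ X₂) (B j)).card : ℚ) := by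
      rw [← hWX2', hsplit2]; push_cast; ring
    rw [h1, hbc]
    rw [hcard2] at hle2
    linarith
  have hbound1 : c * X₁.card ≤ ((margEdges G X₁ (Bi \ X)).card : ℚ) := by
    rcases X₁.eq_empty_or_nonempty with h | hX₁ne
    · rw [h]; simp
    · have hmono : margEdges G X₁ (B j \ X₁) ⊆ margEdges G X₁ (Bi \ X) := by
        apply margEdges_mono
        intro a ha
        rw [Finset.mem_sdiff] at ha ⊢
        refine ⟨hssj1.subset ha.1, fun haX => ha.2 ?_⟩
        rw [hX₁def]; exact Finset.mem_inter.2 ⟨haX, ha.1⟩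
      have hldBj : LocallyDense G (B j) := (hall _).2 ⟨j, le_of_lt hjk, rfl⟩
      have hY₀dj : Disjoint Y₀ (B j) := by rw [hY₀def]; exact Finset.sdiff_disjoint
      have key := ld_mul G hldBj (Finset.inter_subset_right) hX₁ne hY₀dj hY₀ne
      rw [← hX₁def, hbc] at key
      have h2 : c * (Y₀.card : ℚ) * X₁.card = c * X₁.card * Y₀.card := by ring
      rw [h2] at key
      have h3 := (mul_lt_mul_iff_left₀ hY₀pos).1 key
      calc c * X₁.card ≤ ((margEdges G X₁ (B j \ X₁)).card : ℚ) := le_of_lt h3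
        _ ≤ _ := by exact_mod_cast Finset.card_le_card hmono
  have hcardX : (X.card : ℚ) = (X₂.card : ℚ) + X₁.card := by
    rw [← hXsplit, Finset.card_union_of_disjoint (hd12.mono_right Finset.subset_union_left)]
    push_cast; ring
  rw [hcardX]
  calc c * ((X₂.card : ℚ) + X₁.card) = c * X₂.card + c * X₁.card := by ring
    _ ≤ ((margEdges G X₂ (Bi \ X₂)).card : ℚ) + ((margEdges G X₁ (Bi \ X)).card : ℚ) :=
        add_le_add hbound2 hbound1
    _ = _ := by rw [hsplit1, ← hWX2]; push_cast; ring

end Chain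

theorem maximizer_eq_chain_element [Fintype V] [DecidableEq V] (G : SimpleGraph V) [DecidableRel G.Adj]
    (k : ℕ) (B : ℕ → Finset V)
    (hchain : ∀ i j, i < j → j ≤ k → B i ⊂ B j)
    (hall : ∀ W : Finset V, LocallyDense G W ↔ ∃ i ≤ k, W = B i)
    (hB0 : B 0 = ∅) (hBk : B k = Finset.univ)
    (i : ℕ) (hik : i ≤ k) (α : ℚ)
    (hαup : i < k → outDensity G (B (i + 1)) (B i) < α)
    (hαlo : 1 ≤ i → α ≤ outDensity G (B i) (B (i - 1))) :
    (∀ W : Finset V,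
      ((innerEdges G W).card : ℚ) - α * W.card
        ≤ ((innerEdges G (B i)).card : ℚ) - α * (B i).card) ∧
    (∀ W : Finset V,
      ((innerEdges G W).card : ℚ) - α * W.card
        = ((innerEdges G (B i)).card : ℚ) - α * (B i).card → W ⊆ B i) := by
  classical
  have hmain : ∀ W : Finset V,
      (((innerEdges G W).card : ℚ) - α * W.card
          ≤ ((innerEdges G (B i)).card : ℚ) - α * (B i).card) ∧
      (¬ W ⊆ B i →
        ((innerEdges G W).card : ℚ) - α * W.card
          < ((innerEdges G (B i)).card : ℚ) - α * (B i).card) := by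
    intro W
    set W₁ : Finset V := W ∩ B i with hW₁def
    set Yw : Finset V := W \ B i with hYwdef
    set Xw : Finset V := B i \ W with hXwdef
    have hYW₁ : Disjoint Yw W₁ := by
      rw [hYwdef, hW₁def]
      exact Finset.disjoint_left.2 fun a ha ha' =>
        (Finset.mem_sdiff.1 ha).2 (Finset.mem_inter.1 ha').2
    have hXW₁ : Disjoint Xw W₁ := by
      rw [hXwdef, hW₁def]
      exact Finset.disjoint_left.2 fun a ha ha' =>
        (Finset.mem_sdiff.1 ha).2 (Finset.mem_inter.1 ha').1
    have hYunion : Yw ∪ W₁ = W := by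
      rw [hYwdef, hW₁def]
      ext a; simp only [Finset.mem_union, Finset.mem_sdiff, Finset.mem_inter]; tauto
    have hXunion : Xw ∪ W₁ = B i := by
      rw [hXwdef, hW₁def]
      ext a; simp only [Finset.mem_union, Finset.mem_sdiff, Finset.mem_inter]; tauto
    have hsplitW : (innerEdges G W).card = (margEdges G Yw W₁).card + (innerEdges G W₁).card := by
      rw [← hYunion]; exact innerEdges_split G hYW₁
    have hsplitB : (innerEdges G (B i)).card
        = (margEdges G Xw W₁).card + (innerEdges G W₁).card := by
      rw [← hXunion]; exact innerEdges_split G hXW₁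
    have hcardW : (W.card : ℚ) = (Yw.card : ℚ) + W₁.card := by
      rw [← hYunion, Finset.card_union_of_disjoint hYW₁]; push_cast; ring
    have hcardB : ((B i).card : ℚ) = (Xw.card : ℚ) + W₁.card := by
      rw [← hXunion, Finset.card_union_of_disjoint hXW₁]; push_cast; ring
    have hW₁X : W₁ = B i \ Xw := by
      rw [hW₁def, hXwdef]
      ext a; simp only [Finset.mem_sdiff, Finset.mem_inter]; tauto
    -- claim 1
    have claim1 : α * Xw.card ≤ ((margEdges G Xw W₁).card : ℚ) := by
      rcases Nat.eq_zero_or_pos i with rfl | hi1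
      · have : Xw = ∅ := by rw [hXwdef, hB0]; simp
        rw [this]; simp
      · obtain ⟨j, rfl⟩ : ∃ j, i = j + 1 := ⟨i - 1, by omega⟩
        have hjk : j < k := by omega
        have hXs : Xw ⊆ B (j+1) := by rw [hXwdef]; exact Finset.sdiff_subset
        have h1 := int_density_ge G hchain hall hBk hjk hXs
        have hαc : α ≤ outDensity G (B (j+1)) (B j) := by
          have := hαlo (by omega)
          simpa using this
        rw [hW₁X]
        calc α * (Xw.card : ℚ) ≤ outDensity G (B (j+1)) (B j) * Xw.card :=
              mul_le_mul_of_nonneg_right hαc (by positivity)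
          _ ≤ _ := h1
    -- claim 2
    have claim2 : ((margEdges G Yw W₁).card : ℚ) ≤ α * Yw.card ∧
        (Yw.Nonempty → ((margEdges G Yw W₁).card : ℚ) < α * Yw.card) := by
      rcases eq_or_lt_of_le hik with rfl | hik'
      · have : Yw = ∅ := by rw [hYwdef, hBk]; simp
        rw [this]
        constructor
        · simp [margEdges_empty_left]
        · rintro ⟨y, hy⟩; simp at hy
      · have hmono : margEdges G Yw W₁ ⊆ margEdges G Yw (B i) :=
          margEdges_mono G Yw Finset.inter_subset_right
        have h1 : ((margEdges G Yw W₁).card : ℚ) ≤ ((margEdges G Yw (B i)).card : ℚ) := by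
          exact_mod_cast Finset.card_le_card hmono
        have h2 := ext_density_le G hchain hall hBk hik'
          (Y := Yw) (by rw [hYwdef]; exact Finset.sdiff_disjoint)
        have hc := hαup hik'
        constructor
        · calc ((margEdges G Yw W₁).card : ℚ) ≤ _ := h1
            _ ≤ outDensity G (B (i+1)) (B i) * Yw.card := h2
            _ ≤ α * Yw.card := mul_le_mul_of_nonneg_right (le_of_lt hc) (by positivity)
        · intro hYne
          calc ((margEdges G Yw W₁).card : ℚ) ≤ _ := h1
            _ ≤ outDensity G (B (i+1)) (B i) * Yw.card := h2
            _ < α * Yw.card := mul_lt_mul_of_pos_right hc (card_pos_rat hYne)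
    constructor
    · have := claim2.1
      rw [hsplitW, hsplitB, hcardW, hcardB]
      push_cast
      linarith
    · intro hnsub
      have hYne : Yw.Nonempty := by
        rw [hYwdef, Finset.sdiff_nonempty]; exact hnsub
      have := claim2.2 hYne
      rw [hsplitW, hsplitB, hcardW, hcardB]
      push_cast
      linarith
  constructor
  · exact fun W => (hmain W).1
  · intro W heq
    by_contra hnsub
    exact absurd heq (ne_of_lt ((hmain W).2 hnsub))
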